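/- Let n ≥ 1, m ≥ 1, α > 0, μ > 0, L ≥ 0, and let f : ℝⁿ → ℝ be L-smooth. Then for every p ∈ ℝⁿ, ‖∇f(p) − 𝔼[(n/(2mα²μ)) • Σ_{i=1}^{m} (f(p + μ•vᵢ) − f(p − μ•vᵢ)) • vᵢ]‖ ≤ L·n·α·μ/2, where the expectation is over v₁, …, v_m drawn independently from the uniform probability measure σ_α on the origin-centered sphere of radius α (i.e. the integral over the m-fold product measure σ_α^⊗m). -/

import Mathlib

open MeasureTheory

lemma exists_isom {E : Type*} [NormedAddCommGroup E] [InnerProductSpace ℝ E]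
    [CompleteSpace E] (x y : E) (h : ‖x‖ = ‖y‖) : ∃ R : E ≃ₗᵢ[ℝ] E, R x = y := by
  by_cases hz : x + y = 0
  · exact ⟨LinearIsometryEquiv.neg ℝ, by
      simp [show y = -x by linear_combination (norm := module) hz]⟩
  · refine ⟨Submodule.reflection (ℝ ∙ (x + y)), ?_⟩
    rw [Submodule.reflection_singleton_apply]
    have hz2 : ‖x + y‖ ^ 2 ≠ 0 := by simpa using hz
    have hinner : (inner ℝ (x + y) x : ℝ) * 2 = ‖x + y‖ ^ 2 := by
      rw [@norm_add_sq_real, inner_add_left, real_inner_self_eq_norm_sq, h, real_inner_comm]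
      ring
    have h2 : (2:ℕ) • ((inner ℝ (x + y) x : ℝ) / ((‖x + y‖:ℝ):ℝ) ^ 2) • (x + y)
        = (((inner ℝ (x + y) x : ℝ) / (‖x + y‖:ℝ) ^ 2) * 2) • (x + y) := by
      rw [← Nat.cast_smul_eq_nsmul ℝ, smul_smul]
      norm_num [mul_comm]
    simp only [RCLike.ofReal_real_eq_id, id_eq]
    rw [h2, div_mul_eq_mul_div, hinner, div_self hz2, one_smul]
    abel

lemma descent {E : Type*} [NormedAddCommGroup E] [InnerProductSpace ℝ E] [CompleteSpace E]
    (f : E → ℝ) (L : ℝ) (hL : 0 ≤ L)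
    (hf_diff : Differentiable ℝ f)
    (hf_smooth : ∀ x y, ‖gradient f x - gradient f y‖ ≤ L * ‖x - y‖)
    (x d : E) :
    |f (x + d) - f x - inner ℝ (gradient f x) d| ≤ L / 2 * ‖d‖ ^ 2 := by
  have hgrad_cont : Continuous (gradient f) := by
    have : LipschitzWith (Real.toNNReal L) (gradient f) := by
      apply LipschitzWith.of_dist_le_mul
      intro a b
      rw [dist_eq_norm, dist_eq_norm, Real.coe_toNNReal L hL]
      exact hf_smooth a b
    exact this.continuous
  set φ' : ℝ → ℝ := fun t => inner ℝ (gradient f (x + t • d)) d with hφ'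
  have hcurve : ∀ t : ℝ, HasDerivAt (fun s : ℝ => x + s • d) d t := by
    intro t
    simpa using ((hasDerivAt_id t).smul_const d).const_add x
  have hderiv : ∀ t : ℝ, HasDerivAt (fun s => f (x + s • d)) (φ' t) t := by
    intro t
    have hf' : HasFDerivAt f ((InnerProductSpace.toDual ℝ E) (gradient f (x + t • d))) (x + t • d) :=
      (hasGradientAt_iff_hasFDerivAt).1 (hf_diff _).hasGradientAt
    exact hf'.comp_hasDerivAt t (hcurve t)
  have hφ'cont : Continuous φ' := by
    apply Continuous.inner
    · exact hgrad_cont.comp (by continuity)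
    · exact continuous_const
  have hftc : ∫ t in (0:ℝ)..1, φ' t = f (x + d) - f x := by
    have := intervalIntegral.integral_eq_sub_of_hasDerivAt
      (f := fun s => f (x + s • d)) (f' := φ') (a := 0) (b := 1)
      (fun t _ => hderiv t) (hφ'cont.intervalIntegrable 0 1)
    simpa using this
  have hconst : ∫ t in (0:ℝ)..1, (inner ℝ (gradient f x) d : ℝ) = inner ℝ (gradient f x) d := by
    simp
  have key : f (x + d) - f x - inner ℝ (gradient f x) d
      = ∫ t in (0:ℝ)..1, (φ' t - inner ℝ (gradient f x) d) := by
    rw [intervalIntegral.integral_sub (hφ'cont.intervalIntegrable 0 1)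
      (intervalIntegrable_const), hftc, hconst]
  have hbound : ∀ t ∈ Set.uIoc (0:ℝ) 1, ‖φ' t - inner ℝ (gradient f x) d‖ ≤ L * ‖d‖^2 * t := by
    intro t ht
    rw [Set.uIoc_of_le zero_le_one] at ht
    have hts : φ' t - inner ℝ (gradient f x) d
        = inner ℝ (gradient f (x + t • d) - gradient f x) d := by
      rw [inner_sub_left]
    rw [hts]
    calc ‖(inner ℝ (gradient f (x + t • d) - gradient f x) d : ℝ)‖
        ≤ ‖gradient f (x + t • d) - gradient f x‖ * ‖d‖ := norm_inner_le_norm _ _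
      _ ≤ (L * ‖x + t • d - x‖) * ‖d‖ := by
          have := hf_smooth (x + t • d) x
          exact mul_le_mul_of_nonneg_right this (norm_nonneg d)
      _ = L * ‖d‖^2 * t := by
          have : x + t • d - x = t • d := by abel
          rw [this, norm_smul, Real.norm_eq_abs, abs_of_pos ht.1]
          ring
  have h1 : ‖∫ t in (0:ℝ)..1, (φ' t - inner ℝ (gradient f x) d)‖
      ≤ |∫ t in (0:ℝ)..1, L * ‖d‖^2 * t| := by
    apply intervalIntegral.norm_integral_le_abs_of_norm_le
    · exact (ae_restrict_mem measurableSet_uIoc).mono hbound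
    · exact (continuous_const.mul continuous_id).intervalIntegrable 0 1
  have h2 : (∫ t in (0:ℝ)..1, L * ‖d‖^2 * t) = L / 2 * ‖d‖^2 := by
    rw [intervalIntegral.integral_const_mul, integral_id]
    ring
  rw [Real.norm_eq_abs] at h1
  rw [h2] at h1
  calc |f (x + d) - f x - inner ℝ (gradient f x) d| = |∫ t in (0:ℝ)..1, (φ' t - inner ℝ (gradient f x) d)| := by rw [key]
    _ ≤ |L / 2 * ‖d‖^2| := h1
    _ = L / 2 * ‖d‖^2 := abs_of_nonneg (by positivity)
lemma sphere_integrable {n : ℕ} {F : Type*} [NormedAddCommGroup F]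
    (σ : Measure (EuclideanSpace ℝ (Fin n))) [IsProbabilityMeasure σ] {α : ℝ}
    (hσ_sphere : ∀ᵐ v ∂σ, ‖v‖ = α)
    (h : EuclideanSpace ℝ (Fin n) → F) (hc : Continuous h) (C : ℝ)
    (hb : ∀ v, ‖v‖ = α → ‖h v‖ ≤ C) : Integrable h σ :=
  ⟨hc.aestronglyMeasurable, HasFiniteIntegral.of_bounded (hσ_sphere.mono fun v hv => hb v hv)⟩

lemma rot_integral {n : ℕ} {F : Type*} [NormedAddCommGroup F] [NormedSpace ℝ F]
    (σ : Measure (EuclideanSpace ℝ (Fin n)))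
    (hσ_rot : ∀ R : EuclideanSpace ℝ (Fin n) ≃ₗᵢ[ℝ] EuclideanSpace ℝ (Fin n),
      Measure.map R σ = σ)
    (R : EuclideanSpace ℝ (Fin n) ≃ₗᵢ[ℝ] EuclideanSpace ℝ (Fin n))
    (h : EuclideanSpace ℝ (Fin n) → F) (hc : Continuous h) :
    ∫ v, h (R v) ∂σ = ∫ v, h v ∂σ := by
  conv_rhs => rw [← hσ_rot R]
  rw [integral_map R.continuous.measurable.aemeasurable hc.aestronglyMeasurable]

lemma moment {n : ℕ} (hn : 1 ≤ n) {α : ℝ} (hα : 0 < α)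
    (σ : Measure (EuclideanSpace ℝ (Fin n))) [IsProbabilityMeasure σ]
    (hσ_sphere : ∀ᵐ v ∂σ, ‖v‖ = α)
    (hσ_rot : ∀ R : EuclideanSpace ℝ (Fin n) ≃ₗᵢ[ℝ] EuclideanSpace ℝ (Fin n),
      Measure.map R σ = σ)
    (g : EuclideanSpace ℝ (Fin n)) :
    ∫ v, (inner ℝ g v : ℝ) • v ∂σ = (α ^ 2 / n) • g := by
  have hn0 : (n : ℝ) ≠ 0 := by positivity
  -- integrability of the square of the inner ℝ product
  have Jcont : ∀ g : EuclideanSpace ℝ (Fin n), Continuous fun v => (inner ℝ g v : ℝ) ^ 2 :=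
    fun g => ((continuous_const.inner continuous_id).pow 2)
  have Jint : ∀ g : EuclideanSpace ℝ (Fin n), Integrable (fun v => (inner ℝ g v : ℝ) ^ 2) σ := by
    intro g
    refine sphere_integrable σ hσ_sphere _ (Jcont g) ((‖g‖ * α) ^ 2) fun v hv => ?_
    have hb : |(inner ℝ g v : ℝ)| ≤ ‖g‖ * α := by rw [← hv]; exact abs_real_inner_le_norm g v
    calc ‖(inner ℝ g v : ℝ) ^ 2‖ = |(inner ℝ g v : ℝ)| ^ 2 := by
          rw [Real.norm_eq_abs, abs_of_nonneg (sq_nonneg _), sq_abs]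
      _ ≤ (‖g‖ * α) ^ 2 := pow_le_pow_left₀ (abs_nonneg _) hb 2
  have Tint : ∀ g : EuclideanSpace ℝ (Fin n),
      Integrable (fun v => (inner ℝ g v : ℝ) • v) σ := by
    intro g
    refine sphere_integrable σ hσ_sphere _ ((continuous_const.inner continuous_id).fun_smul continuous_id)
      (‖g‖ * α * α) fun v hv => ?_
    rw [norm_smul, Real.norm_eq_abs, hv]
    exact mul_le_mul_of_nonneg_right (by rw [← hv]; exact abs_real_inner_le_norm g v) hα.le
  -- invariance of J
  have Jinv : ∀ (R : EuclideanSpace ℝ (Fin n) ≃ₗᵢ[ℝ] EuclideanSpace ℝ (Fin n))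
      (g : EuclideanSpace ℝ (Fin n)),
      ∫ v, (inner ℝ (R g) v : ℝ) ^ 2 ∂σ = ∫ v, (inner ℝ g v : ℝ) ^ 2 ∂σ := by
    intro R g
    rw [← rot_integral σ hσ_rot R _ (Jcont (R g))]
    simp_rw [LinearIsometryEquiv.inner_map_map]
  -- J is constant on unit vectors
  have Junit : ∀ e e' : EuclideanSpace ℝ (Fin n), ‖e‖ = 1 → ‖e'‖ = 1 →
      ∫ v, (inner ℝ e v : ℝ) ^ 2 ∂σ = ∫ v, (inner ℝ e' v : ℝ) ^ 2 ∂σ := by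
    intro e e' he he'
    obtain ⟨R, hR⟩ := exists_isom e e' (by rw [he, he'])
    rw [← hR, Jinv]
  -- sum over the standard orthonormal basis
  haveI : Nonempty (Fin n) := ⟨⟨0, hn⟩⟩
  set b := EuclideanSpace.basisFun (Fin n) ℝ with hb
  have hsum : ∑ j : Fin n, ∫ v, (inner ℝ (b j) v : ℝ) ^ 2 ∂σ = α ^ 2 := by
    rw [← integral_finset_sum _ (fun j _ => Jint (b j))]
    have : ∀ᵐ v ∂σ, ∑ j : Fin n, (inner ℝ (b j) v : ℝ) ^ 2 = α ^ 2 := by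
      filter_upwards [hσ_sphere] with v hv
      have := b.sum_inner_mul_inner v v
      calc ∑ j : Fin n, (inner ℝ (b j) v : ℝ) ^ 2
          = ∑ j : Fin n, (inner ℝ v (b j) : ℝ) * (inner ℝ (b j) v : ℝ) := by
            refine Finset.sum_congr rfl fun j _ => ?_
            rw [sq, real_inner_comm]
        _ = inner ℝ v v := this
        _ = α ^ 2 := by rw [real_inner_self_eq_norm_sq, hv]
    rw [integral_congr_ae this]
    simp
  have Jval : ∀ e : EuclideanSpace ℝ (Fin n), ‖e‖ = 1 →
      ∫ v, (inner ℝ e v : ℝ) ^ 2 ∂σ = α ^ 2 / n := by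
    intro e he
    have hb1 : ∀ j, ‖b j‖ = 1 := fun j => b.orthonormal.1 j
    have : ∑ j : Fin n, ∫ v, (inner ℝ (b j) v : ℝ) ^ 2 ∂σ
        = (n : ℝ) * ∫ v, (inner ℝ e v : ℝ) ^ 2 ∂σ := by
      rw [Finset.sum_congr rfl fun j _ => Junit (b j) e (hb1 j) he]
      simp [mul_comm]
    rw [this] at hsum
    rw [eq_div_iff hn0]
    linarith [hsum]
  -- now the main computation for T g = ∫ ⟪g,v⟫ • v
  by_cases hg : g = 0
  · simp [hg]
  -- T g is in the span of g
  have hTmem : (∫ v, (inner ℝ g v : ℝ) • v ∂σ) ∈ (Submodule.span ℝ {g}) := by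
    set R := Submodule.reflection (Submodule.span ℝ {g}) with hR
    have hRg : R g = g :=
      Submodule.reflection_mem_subspace_eq_self (Submodule.mem_span_singleton_self g)
    have hfix : R (∫ v, (inner ℝ g v : ℝ) • v ∂σ) = ∫ v, (inner ℝ g v : ℝ) • v ∂σ := by
      have hcomm := (ContinuousLinearMap.integral_comp_comm
          ((R.toContinuousLinearEquiv :
            EuclideanSpace ℝ (Fin n) ≃L[ℝ] EuclideanSpace ℝ (Fin n)) :
            EuclideanSpace ℝ (Fin n) →L[ℝ] EuclideanSpace ℝ (Fin n)) (Tint g)).symm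
      have hRcoe : ∀ x : EuclideanSpace ℝ (Fin n),
          ((R.toContinuousLinearEquiv :
            EuclideanSpace ℝ (Fin n) ≃L[ℝ] EuclideanSpace ℝ (Fin n)) :
            EuclideanSpace ℝ (Fin n) →L[ℝ] EuclideanSpace ℝ (Fin n)) x = R x := fun x => rfl
      simp_rw [hRcoe] at hcomm
      rw [hcomm]
      have : ∀ v, R ((inner ℝ g v : ℝ) • v) = (inner ℝ (R g) (R v) : ℝ) • (R v) := by
        intro v
        rw [_root_.map_smul, LinearIsometryEquiv.inner_map_map]
      simp_rw [this, hRg]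
      exact rot_integral σ hσ_rot R _ ((continuous_const.inner continuous_id).fun_smul continuous_id)
    exact (Submodule.reflection_eq_self_iff _).mp hfix
  obtain ⟨c, hc⟩ := Submodule.mem_span_singleton.mp hTmem
  rw [← hc]
  -- compute c by taking inner ℝ product with g
  have hinner : (inner ℝ g (∫ v, (inner ℝ g v : ℝ) • v ∂σ) : ℝ)
      = ∫ v, (inner ℝ g v : ℝ) ^ 2 ∂σ := by
    rw [← integral_inner (Tint g) g]
    congr 1
    ext v
    rw [real_inner_smul_right, sq]
  -- J g = ‖g‖² α²/n by scaling
  have hgn : ‖g‖ ≠ 0 := norm_ne_zero_iff.mpr hg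
  have hJg : ∫ v, (inner ℝ g v : ℝ) ^ 2 ∂σ = ‖g‖ ^ 2 * (α ^ 2 / n) := by
    have hu : ‖(‖g‖⁻¹ • g)‖ = 1 := by
      rw [norm_smul, Real.norm_eq_abs, abs_of_nonneg (inv_nonneg.mpr (norm_nonneg g)),
        inv_mul_cancel₀ hgn]
    have := Jval _ hu
    have hsc : ∀ v : EuclideanSpace ℝ (Fin n),
        (inner ℝ g v : ℝ) ^ 2 = ‖g‖ ^ 2 * (inner ℝ ((‖g‖⁻¹ • g)) v : ℝ) ^ 2 := by
      intro v
      rw [real_inner_smul_left]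
      field_simp
    simp_rw [hsc]
    rw [integral_const_mul, this]
  -- conclude
  have hcg : (inner ℝ g (c • g) : ℝ) = c * ‖g‖ ^ 2 := by
    rw [real_inner_smul_right, real_inner_self_eq_norm_sq]
  have : c * ‖g‖ ^ 2 = ‖g‖ ^ 2 * (α ^ 2 / n) := by
    rw [← hcg, hc, hinner, hJg]
  have hceq : c = α ^ 2 / n := by
    have h2 : ‖g‖ ^ 2 ≠ 0 := pow_ne_zero 2 hgn
    field_simp at this ⊢
    exact mul_left_cancel₀ h2 (by linear_combination (‖g‖ ^ 2) * this)
  rw [hceq]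

lemma map_eval_pi {δ : Type*} [Fintype δ] [DecidableEq δ] {X : Type*} [MeasurableSpace X]
    (σ : Measure X) [IsProbabilityMeasure σ] (i : δ) :
    (Measure.pi fun _ : δ => σ).map (fun v => v i) = σ := by
  ext s hs
  rw [Measure.map_apply (measurable_pi_apply i) hs]
  have : (Function.eval i ⁻¹' s : Set (δ → X)) = Set.pi Set.univ (Function.update (fun _ => Set.univ) i s) :=
    Set.eval_preimage
  rw [show (fun v : δ → X => v i) ⁻¹' s = Set.pi Set.univ (Function.update (fun _ => Set.univ) i s) from this,
    Measure.pi_pi]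
  rw [Finset.prod_eq_single i (fun j _ hj => by rw [Function.update_of_ne hj]; simp)
    (fun h => absurd (Finset.mem_univ i) h)]
  rw [Function.update_self]

/-- For an `L`-smooth `f : ℝⁿ → ℝ`, the ensembled two-point zeroth-order
gradient estimator `(n/(2mα²μ)) • Σᵢ (f(p+μvᵢ) − f(p−μvᵢ)) • vᵢ` over `m` i.i.d. samples
`v₁, …, v_m ∼ σ` has bias at most `Lnαμ/2` in norm. -/
theorem gw_gradient_estimation_ensembled
    (n m : ℕ) (hn : 1 ≤ n) (hm : 1 ≤ m) (α μ L : ℝ) (hα : 0 < α) (hμ : 0 < μ) (hL : 0 ≤ L)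
    (σ : Measure (EuclideanSpace ℝ (Fin n))) [IsProbabilityMeasure σ]
    (hσ_sphere : ∀ᵐ v ∂σ, ‖v‖ = α)
    (hσ_rot : ∀ R : EuclideanSpace ℝ (Fin n) ≃ₗᵢ[ℝ] EuclideanSpace ℝ (Fin n),
      Measure.map R σ = σ)
    (f : EuclideanSpace ℝ (Fin n) → ℝ)
    (hf_diff : Differentiable ℝ f)
    (hf_smooth : ∀ x y, ‖gradient f x - gradient f y‖ ≤ L * ‖x - y‖)
    (p : EuclideanSpace ℝ (Fin n)) :
    ‖gradient f p -
        ∫ v, ((n : ℝ) / (2 * m * α ^ 2 * μ)) •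
            ∑ i : Fin m, (f (p + μ • v i) - f (p - μ • v i)) • v i
          ∂(Measure.pi fun _ : Fin m => σ)‖
      ≤ L * n * α * μ / 2 := by
  have hn0 : (n : ℝ) ≠ 0 := by positivity
  have hm0 : (m : ℝ) ≠ 0 := by positivity
  set G := gradient f p with hG
  set F : EuclideanSpace ℝ (Fin n) → EuclideanSpace ℝ (Fin n) :=
    fun w => (f (p + μ • w) - f (p - μ • w)) • w with hF
  have hfc : Continuous f := hf_diff.continuous
  have hFc : Continuous F := by
    apply Continuous.fun_smul
    · exact (hfc.comp (continuous_const.add (continuous_id.const_smul μ))).sub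
        (hfc.comp (continuous_const.sub (continuous_id.const_smul μ)))
    · exact continuous_id
  -- error function and its bound
  set err : EuclideanSpace ℝ (Fin n) → ℝ :=
    fun w => f (p + μ • w) - f (p - μ • w) - 2 * μ * inner ℝ G w with herr
  have herrc : Continuous err := by
    apply Continuous.fun_sub
    · exact (hfc.comp (continuous_const.add (continuous_id.const_smul μ))).sub
        (hfc.comp (continuous_const.sub (continuous_id.const_smul μ)))
    · exact continuous_const.mul (continuous_const.inner continuous_id)
  have herr_bound : ∀ w : EuclideanSpace ℝ (Fin n), ‖w‖ = α → |err w| ≤ L * μ ^ 2 * α ^ 2 := by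
    intro w hw
    have h1 := descent f L hL hf_diff hf_smooth p (μ • w)
    have h2 := descent f L hL hf_diff hf_smooth p (-(μ • w))
    rw [norm_smul, Real.norm_eq_abs, abs_of_pos hμ, hw, real_inner_smul_right] at h1
    rw [norm_neg, norm_smul, Real.norm_eq_abs, abs_of_pos hμ, hw, inner_neg_right,
      real_inner_smul_right, show p + -(μ • w) = p - μ • w by abel] at h2
    have : err w = (f (p + μ • w) - f p - μ * inner ℝ G w)
        - (f (p - μ • w) - f p - -(μ * inner ℝ G w)) := by
      rw [herr]; ring
    rw [this]
    calc |(f (p + μ • w) - f p - μ * inner ℝ G w)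
          - (f (p - μ • w) - f p - -(μ * inner ℝ G w))|
        ≤ |f (p + μ • w) - f p - μ * inner ℝ G w|
          + |f (p - μ • w) - f p - -(μ * inner ℝ G w)| := abs_sub _ _
      _ ≤ L / 2 * (μ * α) ^ 2 + L / 2 * (μ * α) ^ 2 := add_le_add h1 h2
      _ = L * μ ^ 2 * α ^ 2 := by ring
  -- integrability over σ
  have hGint : Integrable (fun w => (inner ℝ G w : ℝ) • w) σ := by
    refine sphere_integrable σ hσ_sphere _
      ((continuous_const.inner continuous_id).fun_smul continuous_id) (‖G‖ * α * α)
      fun v hv => ?_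
    rw [norm_smul, Real.norm_eq_abs, hv]
    exact mul_le_mul_of_nonneg_right (by rw [← hv]; exact abs_real_inner_le_norm G v) hα.le
  have hErrint : Integrable (fun w => err w • w) σ := by
    refine sphere_integrable σ hσ_sphere _ (herrc.smul continuous_id)
      (L * μ ^ 2 * α ^ 2 * α) fun v hv => ?_
    rw [norm_smul, Real.norm_eq_abs, hv]
    exact mul_le_mul_of_nonneg_right (herr_bound v hv) hα.le
  have hFdecomp : ∀ w : EuclideanSpace ℝ (Fin n),
      F w = (2 * μ) • ((inner ℝ G w : ℝ) • w) + err w • w := by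
    intro w
    rw [hF, herr, smul_smul, ← add_smul]
    congr 1
    ring
  have hGint2 : Integrable (fun w => (2 * μ) • ((inner ℝ G w : ℝ) • w)) σ := hGint.smul (2 * μ)
  have hFint : Integrable F σ := by
    rw [show F = fun w => (2 * μ) • ((inner ℝ G w : ℝ) • w) + err w • w from funext hFdecomp]
    exact hGint2.add hErrint
  -- single-sample integral
  have hmom := moment hn hα σ hσ_sphere hσ_rot G
  have hIF : ∫ w, F w ∂σ = (2 * μ * (α ^ 2 / n)) • G + ∫ w, err w • w ∂σ := by
    rw [show (∫ w, F w ∂σ)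
        = ∫ w, ((2 * μ) • ((inner ℝ G w : ℝ) • w) + err w • w) ∂σ from
        integral_congr_ae (Filter.Eventually.of_forall hFdecomp)]
    rw [integral_add hGint2 hErrint, integral_smul, hmom, smul_smul]
  -- error integral bound
  have hEerr : ‖∫ w, err w • w ∂σ‖ ≤ L * μ ^ 2 * α ^ 2 * α := by
    have := norm_integral_le_of_norm_le_const (μ := σ)
      (f := fun w => err w • w) (C := L * μ ^ 2 * α ^ 2 * α) ?_
    · simpa using this
    · filter_upwards [hσ_sphere] with v hv
      rw [norm_smul, Real.norm_eq_abs, hv]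
      exact mul_le_mul_of_nonneg_right (herr_bound v hv) hα.le
  -- reduce the product integral
  have hmap : ∀ i : Fin m, (Measure.pi fun _ : Fin m => σ).map (fun v => v i) = σ :=
    fun i => map_eval_pi σ i
  have hIntPi : ∀ i : Fin m,
      Integrable (fun v : Fin m → EuclideanSpace ℝ (Fin n) => F (v i))
        (Measure.pi fun _ : Fin m => σ) := by
    intro i
    have := hFint
    rw [← hmap i] at this
    exact (integrable_map_measure hFc.aestronglyMeasurable
      (measurable_pi_apply i).aemeasurable).mp this
  have hIntEq : ∀ i : Fin m,
      (∫ v : Fin m → EuclideanSpace ℝ (Fin n), F (v i) ∂(Measure.pi fun _ : Fin m => σ))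
        = ∫ w, F w ∂σ := by
    intro i
    conv_rhs => rw [← hmap i]
    rw [integral_map (measurable_pi_apply i).aemeasurable hFc.aestronglyMeasurable]
  have hpi : (∫ v, ((n : ℝ) / (2 * m * α ^ 2 * μ)) •
        ∑ i : Fin m, (f (p + μ • v i) - f (p - μ • v i)) • v i
        ∂(Measure.pi fun _ : Fin m => σ))
      = ((n : ℝ) / (2 * m * α ^ 2 * μ)) • ((m : ℝ) • ∫ w, F w ∂σ) := by
    rw [integral_smul]
    congr 1
    rw [show (fun v : Fin m → EuclideanSpace ℝ (Fin n) =>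
        ∑ i : Fin m, (f (p + μ • v i) - f (p - μ • v i)) • v i)
        = fun v => ∑ i : Fin m, F (v i) from rfl]
    rw [integral_finset_sum _ (fun i _ => hIntPi i)]
    rw [Finset.sum_congr rfl (fun i _ => hIntEq i)]
    rw [Finset.sum_const, Finset.card_univ, Fintype.card_fin, ← Nat.cast_smul_eq_nsmul ℝ]
  rw [hpi]
  -- final computation
  have hsmul : ((n : ℝ) / (2 * m * α ^ 2 * μ)) • ((m : ℝ) • ∫ w, F w ∂σ)
      = ((n : ℝ) / (2 * α ^ 2 * μ)) • ∫ w, F w ∂σ := by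
    rw [smul_smul]
    congr 1
    field_simp
  rw [hsmul, hIF, smul_add, smul_smul]
  have hone : (n : ℝ) / (2 * α ^ 2 * μ) * (2 * μ * (α ^ 2 / n)) = 1 := by
    field_simp
  rw [hone, one_smul]
  rw [show G - (G + ((n : ℝ) / (2 * α ^ 2 * μ)) • ∫ w, err w • w ∂σ)
      = -(((n : ℝ) / (2 * α ^ 2 * μ)) • ∫ w, err w • w ∂σ) by abel]
  rw [norm_neg, norm_smul, Real.norm_eq_abs]
  have hpos : (0:ℝ) < (n : ℝ) / (2 * α ^ 2 * μ) := by positivity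
  rw [abs_of_pos hpos]
  calc (n : ℝ) / (2 * α ^ 2 * μ) * ‖∫ w, err w • w ∂σ‖
      ≤ (n : ℝ) / (2 * α ^ 2 * μ) * (L * μ ^ 2 * α ^ 2 * α) :=
        mul_le_mul_of_nonneg_left hEerr hpos.le
    _ = L * n * α * μ / 2 := by field_simp
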